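/- Assume p ≥ 3. Let e ≥ 1, let V be a totally ramified extension of W(k) of degree at most e, and let π be any uniformizer of V. Then for every f = Σₙ aₙTⁿ ∈ R̃e(k), each term aₙπⁿ (computed in the fraction field of V) lies in V, the partial sums Σ_{n<N} aₙπⁿ converge in V for the maximal-ideal-adic topology, and the resulting map f ↦ Σₙ aₙπⁿ is a surjective W(k)-algebra homomorphism R̃e(k) → V sending T to π. -/

import Mathlib

/-!
Piano rings (A. Vasiu, "Shimura varieties and the Mumford–Tate conjecture", §2.1).

`W(k)` is the ring of `p`-typical Witt vectors of a perfect field `k` of characteristic `p`,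
`B(k) = W(k)[1/p]` its fraction field.  For `e ≥ 1`, the piano ring `R̃e(k)` of resonance `e`
consists of the power series `Σ aₙ Tⁿ ∈ B(k)[[T]]` with `aₙ ⬝ (⌊n/e⌋)! ∈ W(k)` for all `n`,
and the piano ring `Re(k)` of convergent resonance `e` consists of those for which moreover
`bₙ := aₙ ⬝ (⌊n/e⌋)!` converges `p`-adically to `0`.
-/

noncomputable section

open PowerSeries

variable (p : ℕ) [Fact p.Prime] (k : Type*) [Field k] [CharP k p] [PerfectRing k p]

/-- `x` lies in the canonical image of `W(k)` inside `B(k)`. -/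
def InW (x : FractionRing (WittVector p k)) : Prop :=
  ∃ w : WittVector p k,
    algebraMap (WittVector p k) (FractionRing (WittVector p k)) w = x

/-- The piano ring `R̃e(k)` of resonance `e`: power series `Σ aₙ Tⁿ` over `B(k)` with
`aₙ ⬝ (⌊n/e⌋)! ∈ W(k)` for all `n`. -/
def pianoTilde (e : ℕ) : Set (PowerSeries (FractionRing (WittVector p k))) :=
  {f | ∀ n : ℕ,
    InW p k (PowerSeries.coeff n f * (Nat.factorial (n / e) : FractionRing (WittVector p k)))}

/-- The piano ring `Re(k)` of convergent resonance `e`: power series `Σ aₙ Tⁿ` over `B(k)`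
with `bₙ := aₙ ⬝ (⌊n/e⌋)! ∈ W(k)` for all `n` and `bₙ → 0` `p`-adically
(for every `m` eventually `bₙ ∈ pᵐ W(k)`). -/
def pianoR (e : ℕ) : Set (PowerSeries (FractionRing (WittVector p k))) :=
  {f | (∀ n : ℕ,
      InW p k (PowerSeries.coeff n f * (Nat.factorial (n / e) : FractionRing (WittVector p k)))) ∧
    ∀ m : ℕ, ∃ N : ℕ, ∀ n ≥ N, ∃ w : WittVector p k,
      algebraMap (WittVector p k) (FractionRing (WittVector p k)) ((p : WittVector p k) ^ m * w)
        = PowerSeries.coeff n f * (Nat.factorial (n / e) : FractionRing (WittVector p k))}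

/-- The canonical embedding `B(k) ↪ Frac V` induced by an injective map `W(k) → V`. -/
def embB (V : Type*) [CommRing V] [IsDomain V] [Algebra (WittVector p k) V]
    (hinj : Function.Injective (algebraMap (WittVector p k) V)) :
    FractionRing (WittVector p k) →+* FractionRing V :=
  IsFractionRing.map hinj

set_option linter.unusedSectionVars false
set_option maxHeartbeats 1000000

section Aux

lemma wv_coeff_mul_pow_p (x : WittVector p k) (m i : ℕ) :
    (x * (p : WittVector p k) ^ m).coeff (i + m) = x.coeff i ^ p ^ m := by
  induction m generalizing x i with
  | zero => simp
  | succ m ih =>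
    have : x * (p : WittVector p k) ^ (m + 1) = (x * p) * (p : WittVector p k) ^ m := by ring
    rw [this, show i + (m + 1) = (i + 1) + m by ring, ih, WittVector.mul_charP_coeff_succ,
      ← pow_mul, pow_succ', pow_mul]

lemma wv_coeff_mul_pow_p_zero (x : WittVector p k) {m i : ℕ} (h : i < m) :
    (x * (p : WittVector p k) ^ m).coeff i = 0 := by
  induction m generalizing x i with
  | zero => omega
  | succ m ih =>
    have : x * (p : WittVector p k) ^ (m + 1) = (x * (p : WittVector p k) ^ m) * p := by ring
    rw [this]
    cases i with
    | zero => exact WittVector.mul_charP_coeff_zero _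
    | succ i =>
      rw [WittVector.mul_charP_coeff_succ, ih _ (by omega), zero_pow (Fact.out : p.Prime).ne_zero]

lemma wv_pow_p_dvd_iff (x : WittVector p k) (m : ℕ) :
    (p : WittVector p k) ^ m ∣ x ↔ ∀ i < m, x.coeff i = 0 := by
  constructor
  · rintro ⟨y, rfl⟩ i hi
    rw [mul_comm]
    exact wv_coeff_mul_pow_p_zero p k y hi
  · intro h
    rcases eq_or_ne x 0 with rfl | hx
    · exact dvd_zero _
    obtain ⟨j, b, hb0, rfl⟩ := WittVector.exists_eq_pow_p_mul x hx
    rcases le_or_gt m j with hle | hlt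
    · exact Dvd.dvd.mul_right (pow_dvd_pow _ hle) b
    · exfalso
      have h1 := h j (by omega)
      rw [mul_comm] at h1
      have h2 : b.coeff 0 ^ p ^ j = 0 := by
        have := wv_coeff_mul_pow_p p k b j 0
        rw [zero_add] at this
        rw [← this]; exact h1
      exact hb0 (pow_eq_zero_iff (pow_ne_zero _ (Fact.out : p.Prime).ne_zero) |>.mp h2)

lemma wv_coeff_eq_of_dvd {x y : WittVector p k} {m : ℕ}
    (h : (p : WittVector p k) ^ m ∣ x - y) {i : ℕ} (hi : i < m) : x.coeff i = y.coeff i := by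
  have h1 := (wv_pow_p_dvd_iff p k (x - y) m).mp h
  have h2 : WittVector.truncate m (x - y) = 0 := by
    rw [← RingHom.mem_ker, WittVector.mem_ker_truncate]; exact h1
  rw [map_sub, sub_eq_zero] at h2
  have := congrArg (fun z => TruncatedWittVector.coeff ⟨i, hi⟩ z) h2
  simpa using this

lemma wv_complete (s : ℕ → WittVector p k)
    (hs : ∀ m N M, m ≤ N → m ≤ M → (p : WittVector p k) ^ m ∣ s N - s M) :
    ∃ L : WittVector p k, ∀ m N, m ≤ N → (p : WittVector p k) ^ m ∣ L - s N := by
  refine ⟨WittVector.mk p (fun i => (s (i + 1)).coeff i), fun m N hm => ?_⟩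
  rw [wv_pow_p_dvd_iff]
  have htr : WittVector.truncate m (WittVector.mk p (fun i => (s (i + 1)).coeff i) - s N) = 0 := by
    rw [map_sub, sub_eq_zero]
    ext i
    rw [WittVector.coeff_truncate, WittVector.coeff_truncate]
    have hcoeff : (s (i.1 + 1)).coeff i.1 = (s N).coeff i.1 :=
      wv_coeff_eq_of_dvd p k (hs (i.1 + 1) (i.1 + 1) N le_rfl (by omega)) (by omega)
    simpa [WittVector.coeff_mk] using hcoeff
  rw [← RingHom.mem_ker, WittVector.mem_ker_truncate] at htr
  exact htr

lemma V_complete (V : Type*) [CommRing V] [IsDomain V] [Algebra (WittVector p k) V]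
    [Module.Finite (WittVector p k) V] [Module.Free (WittVector p k) V]
    (π : V) (c : ℕ) (hc : 1 ≤ c) (u : Vˣ)
    (hu : algebraMap (WittVector p k) V (p : WittVector p k) = u * π ^ c)
    (s : ℕ → V) (hs : ∀ m N M, m ≤ N → m ≤ M → π ^ m ∣ s N - s M) :
    ∃ L : V, ∀ m N, c * m ≤ N → π ^ m ∣ L - s N := by
  set W := WittVector p k
  let B := Module.Free.chooseBasis W V
  have hcoord : ∀ (m : ℕ) (x : V), π ^ (c * m) ∣ x →
      ∀ i, (p : W) ^ m ∣ B.repr x i := by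
    rintro m x ⟨y, rfl⟩ i
    have hπc : π ^ c = (↑u⁻¹ : V) * algebraMap W V (p : W) := by
      rw [hu, ← mul_assoc, Units.inv_mul, one_mul]
    have hx : π ^ (c * m) * y = ((p : W) ^ m) • ((↑u⁻¹ : V) ^ m * y) := by
      rw [pow_mul, hπc, mul_pow, Algebra.smul_def, map_pow]; ring
    rw [hx, map_smul]
    exact ⟨B.repr ((↑u⁻¹ : V) ^ m * y) i, by simp [smul_eq_mul]⟩
  have hσ : ∀ i : Module.Free.ChooseBasisIndex W V, ∃ L : W, ∀ m N, m ≤ N →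
      (p : W) ^ m ∣ L - B.repr (s (c * N)) i := by
    intro i
    apply wv_complete
    intro m N M hN hM
    have hdvd : π ^ (c * m) ∣ s (c * N) - s (c * M) :=
      hs (c * m) (c * N) (c * M) (Nat.mul_le_mul_left c hN) (Nat.mul_le_mul_left c hM)
    have := hcoord m _ hdvd i
    rwa [map_sub, Finsupp.sub_apply] at this
  choose Lc hLc using hσ
  refine ⟨∑ i, Lc i • B i, fun m N hN => ?_⟩
  have hsN : s N = ∑ i, B.repr (s N) i • B i := (B.sum_repr (s N)).symm
  have hdiff : (∑ i, Lc i • B i) - s N = ∑ i, (Lc i - B.repr (s N) i) • B i := by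
    nth_rewrite 1 [hsN]
    rw [← Finset.sum_sub_distrib]
    simp [sub_smul]
  rw [hdiff]
  apply Finset.dvd_sum
  intro i _
  have h1 : (p : W) ^ m ∣ Lc i - B.repr (s (c * m)) i := hLc i m m le_rfl
  have h2 : (p : W) ^ m ∣ B.repr (s (c * m)) i - B.repr (s N) i := by
    have hdvd : π ^ (c * m) ∣ s (c * m) - s N := hs (c * m) (c * m) N le_rfl hN
    have := hcoord m _ hdvd i
    rwa [map_sub, Finsupp.sub_apply] at this
  have h3 : (p : W) ^ m ∣ Lc i - B.repr (s N) i := by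
    have := dvd_add h1 h2
    simpa using this
  obtain ⟨w, hw⟩ := h3
  rw [hw, Algebra.smul_def, map_mul, map_pow, hu, mul_pow, ← pow_mul]
  have : π ^ m ∣ π ^ (c * m) := pow_dvd_pow π (Nat.le_mul_of_pos_left m hc)
  exact (this.mul_left _).mul_right _ |>.mul_right _

lemma dvr_eq_zero_of_forall_dvd {V : Type*} [CommRing V] [IsDomain V] [IsDiscreteValuationRing V]
    {π : V} (hirr : Irreducible π) {x : V} (h : ∀ m : ℕ, π ^ m ∣ x) : x = 0 := by
  by_contra hx
  obtain ⟨j, u, rfl⟩ := IsDiscreteValuationRing.eq_unit_mul_pow_irreducible hx hirr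
  obtain ⟨t, ht⟩ := h (j + 1)
  have hcancel : (u : V) = π * t := by
    have hπj : (π : V) ^ j ≠ 0 := pow_ne_zero _ hirr.ne_zero
    apply mul_left_cancel₀ hπj
    rw [show π ^ j * ((u : V)) = (u : V) * π ^ j by ring, ht, pow_succ]; ring
  exact hirr.not_isUnit (isUnit_of_dvd_unit ⟨t, hcancel⟩ u.isUnit)

end Aux
/-- Assume `p ≥ 3`.  Let `e ≥ 1`, let `V` be a totally ramified extension of
`W(k)` of degree at most `e` (a DVR with an injective local `W(k)`-algebra structure making it
finite free of rank `≤ e` and inducing an isomorphism on residue fields), and let `π` be any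
uniformizer of `V`.  Then for every `f = Σ aₙ Tⁿ ∈ R̃e(k)`, each term `aₙ πⁿ` (computed in
`Frac V`) lies in `V`, the partial sums `Σ_{n<N} aₙπⁿ` converge in `V` for the
maximal-ideal-adic topology, and the resulting map `f ↦ Σ aₙπⁿ` is a surjective
`W(k)`-algebra homomorphism `R̃e(k) → V` sending `T` to `π`. -/
theorem pianoTilde_key (hp3 : 3 ≤ p) (e : ℕ) (he : 1 ≤ e)
    (V : Type*) [CommRing V] [IsDomain V] [IsDiscreteValuationRing V]
    [Algebra (WittVector p k) V]
    (hinj : Function.Injective (algebraMap (WittVector p k) V))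
    (hlocal : ∀ w : WittVector p k, IsUnit (algebraMap (WittVector p k) V w) → IsUnit w)
    (hfin : Module.Finite (WittVector p k) V) (hfree : Module.Free (WittVector p k) V)
    (hrank : Module.finrank (WittVector p k) V ≤ e)
    (hres : ∀ v : V, ∃ w : WittVector p k,
      v - algebraMap (WittVector p k) V w ∈ IsLocalRing.maximalIdeal V)
    (π : V) (hπ : IsLocalRing.maximalIdeal V = Ideal.span {π}) :
    -- each term `aₙ πⁿ` lies in `V`:
    (∀ f ∈ pianoTilde p k e, ∀ n : ℕ, ∃ v : V,
      algebraMap V (FractionRing V) v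
        = embB p k V hinj (PowerSeries.coeff n f) * algebraMap V (FractionRing V) π ^ n) ∧
    -- the summation map `Φ : f ↦ Σₙ aₙπⁿ`:
    ∃ Φ : PowerSeries (FractionRing (WittVector p k)) → V,
      -- the partial sums converge in the maximal-ideal-adic topology to `Φ f`:
      (∀ f ∈ pianoTilde p k e, ∀ s : ℕ → V,
        (∀ N : ℕ, algebraMap V (FractionRing V) (s N)
          = ∑ n ∈ Finset.range N,
              embB p k V hinj (PowerSeries.coeff n f) * algebraMap V (FractionRing V) π ^ n) →
        ∀ m : ℕ, ∃ N₀ : ℕ, ∀ N ≥ N₀, Φ f - s N ∈ IsLocalRing.maximalIdeal V ^ m) ∧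
      -- `Φ` restricted to `R̃e(k)` is a `W(k)`-algebra homomorphism:
      (∀ f ∈ pianoTilde p k e, ∀ g ∈ pianoTilde p k e, Φ (f + g) = Φ f + Φ g) ∧
      (∀ f ∈ pianoTilde p k e, ∀ g ∈ pianoTilde p k e, Φ (f * g) = Φ f * Φ g) ∧
      Φ 1 = 1 ∧
      (∀ w : WittVector p k,
        Φ (PowerSeries.C (R := FractionRing (WittVector p k))
            (algebraMap (WittVector p k) (FractionRing (WittVector p k)) w))
          = algebraMap (WittVector p k) V w) ∧
      -- `Φ` sends `T` to `π`:
      Φ PowerSeries.X = π ∧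
      -- `Φ` is surjective onto `V`:
      (∀ v : V, ∃ f ∈ pianoTilde p k e, Φ f = v) := by  classical
  haveI := hfin; haveI := hfree
  letI : IsDiscreteValuationRing (WittVector p k) := WittVector.isDiscreteValuationRing
  set A := algebraMap (WittVector p k) V with hA
  set ι := algebraMap V (FractionRing V) with hι
  set θ := embB p k V hinj with hθdef
  set algK := algebraMap (WittVector p k) (FractionRing (WittVector p k)) with halgK
  have hθ : ∀ w, θ (algK w) = ι (A w) := fun w => IsLocalization.map_eq (nonZeroDivisors_le_comap_nonZeroDivisors_of_injective _ hinj) w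
  have hιinj : Function.Injective ι := IsFractionRing.injective V (FractionRing V)
  have hπ_irr : Irreducible π := (IsDiscreteValuationRing.irreducible_iff_uniformizer π).mpr hπ
  have hπ0 : π ≠ 0 := hπ_irr.ne_zero
  have hApne : A (p : WittVector p k) ≠ 0 := by
    intro h
    exact WittVector.p_nonzero p k (hinj (by rw [h, map_zero]))
  obtain ⟨c, u, hu⟩ := IsDiscreteValuationRing.eq_unit_mul_pow_irreducible hApne hπ_irr
  have hc1 : 1 ≤ c := by
    rcases Nat.eq_zero_or_pos c with hc0 | h; swap; · exact h
    exfalso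
    rw [hc0, pow_zero, mul_one] at hu
    have : IsUnit ((p : WittVector p k)) := hlocal _ (hu ▸ u.isUnit)
    exact (WittVector.irreducible p).not_isUnit this
  have hce : c ≤ e := by
    have hli : LinearIndependent (WittVector p k) (fun i : Fin c => π ^ (i : ℕ)) := by
      rw [Fintype.linearIndependent_iff]
      intro g hsum
      by_contra hg
      push_neg at hg
      obtain ⟨i₁, hi₁⟩ := hg
      set S : Finset (Fin c) := Finset.univ.filter (fun i => g i ≠ 0) with hS
      have hmemS : ∀ i : Fin c, i ∈ S ↔ g i ≠ 0 := by intro i; simp [hS]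
      have hi₁S : i₁ ∈ S := (hmemS i₁).mpr hi₁
      have hfac : ∀ i : Fin c, g i ≠ 0 → ∃ (m : ℕ) (w : Vˣ),
          A (g i) * π ^ (i : ℕ) = (w : V) * π ^ (c * m + (i : ℕ)) := by
        intro i hgi
        obtain ⟨m, v, hv⟩ := WittVector.exists_eq_pow_p_mul' (g i) hgi
        refine ⟨m, u ^ m * (Units.map A.toMonoidHom v), ?_⟩
        have : A (g i) = (u : V) ^ m * π ^ (c * m) * A (v : WittVector p k) := by
          rw [hv, map_mul, map_pow, hu, mul_pow, pow_mul]
        rw [this]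
        push_cast
        simp only [Units.coe_map, RingHom.toMonoidHom_eq_coe, MonoidHom.coe_coe]
        ring
      choose mfun wfun hfw using hfac
      classical
      set n : Fin c → ℕ := fun i => if h : g i ≠ 0 then c * mfun i h + (i : ℕ) else 0 with hn
      obtain ⟨i₀, hi₀S, hmin⟩ := S.exists_min_image n ⟨i₁, hi₁S⟩
      have hg₀ : g i₀ ≠ 0 := (hmemS i₀).mp hi₀S
      have hn₀ : n i₀ = c * mfun i₀ hg₀ + (i₀ : ℕ) := by rw [hn]; simp [hg₀]
      have hlt : ∀ i ∈ S, i ≠ i₀ → n i₀ + 1 ≤ n i := by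
        intro i hiS hne
        have hgi := (hmemS i).mp hiS
        have hni : n i = c * mfun i hgi + (i : ℕ) := by rw [hn]; simp [hgi]
        rcases eq_or_lt_of_le (hmin i hiS) with heq | hlt'
        · exfalso
          rw [hni, hn₀] at heq
          have h1 : (i₀ : ℕ) < c := i₀.2
          have h2 : (i : ℕ) < c := i.2
          have h3 : (c * mfun i hgi + (i : ℕ)) % c = (c * mfun i₀ hg₀ + (i₀ : ℕ)) % c := by
            rw [heq]
          rw [Nat.mul_add_mod, Nat.mul_add_mod, Nat.mod_eq_of_lt h1, Nat.mod_eq_of_lt h2] at h3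
          exact hne (Fin.ext h3)
        · omega
      have hsum' : ∑ i ∈ S, A (g i) * π ^ (i : ℕ) = 0 := by
        rw [← hsum]
        rw [Finset.sum_filter_of_ne (by
          intro i _ hne0 hgi0
          exact hne0 (by rw [hgi0, map_zero, zero_mul]))]
        exact Finset.sum_congr rfl (fun i _ => by rw [Algebra.smul_def])
      rw [← Finset.add_sum_erase _ _ hi₀S] at hsum'
      have hdvd : π ^ (n i₀ + 1) ∣ ∑ i ∈ S.erase i₀, A (g i) * π ^ (i : ℕ) := by
        apply Finset.dvd_sum
        intro i hi
        have hiS := Finset.mem_of_mem_erase hi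
        have hgi := (hmemS i).mp hiS
        have hni : n i = c * mfun i hgi + (i : ℕ) := by rw [hn]; simp [hgi]
        rw [hfw i hgi, ← hni]
        exact Dvd.dvd.mul_left (pow_dvd_pow π (hlt i hiS (Finset.ne_of_mem_erase hi))) _
      obtain ⟨t, ht⟩ := hdvd
      rw [hfw i₀ hg₀, ← hn₀, ht] at hsum'
      have hw : (wfun i₀ hg₀ : V) = -(π * t) := by
        have hπn : π ^ (n i₀) ≠ 0 := pow_ne_zero _ hπ0
        apply mul_left_cancel₀ hπn
        have : π ^ (n i₀) * (wfun i₀ hg₀ : V) + π ^ (n i₀) * (π * t) = 0 := by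
          rw [← hsum', pow_succ]; ring
        linear_combination this
      exact hπ_irr.not_isUnit (isUnit_of_dvd_unit ⟨-t, by rw [hw]; ring⟩ (wfun i₀ hg₀).isUnit)
    have hcard := hli.fintype_card_le_finrank
    rw [Fintype.card_fin] at hcard
    exact hcard.trans hrank
  have hrunit : ∀ r : ℕ, ¬ p ∣ r → IsUnit ((r : WittVector p k)) := by
    intro r hr
    apply WittVector.isUnit_of_coeff_zero_ne_zero
    have h1 : ((r : WittVector p k)).coeff 0 = (r : k) := by
      rw [← WittVector.constantCoeff_apply, map_natCast]
    rw [h1]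
    exact fun h0 => hr ((CharP.cast_eq_zero_iff k p r).mp h0)
  have hfact : ∀ n : ℕ, ∃ s r : ℕ, ¬ p ∣ r ∧ (n / e).factorial = p ^ s * r
      ∧ 2 * (c * s) ≤ n := by
    intro n
    obtain ⟨r, hr⟩ := pow_padicValNat_dvd (p := p) (n := (n / e).factorial)
    refine ⟨padicValNat p ((n / e).factorial), r, ?_, hr, ?_⟩
    · intro hdvd
      have h2 : p ^ (padicValNat p ((n / e).factorial) + 1) ∣ (n / e).factorial := by
        obtain ⟨r', hr'⟩ := hdvd
        exact ⟨r', by rw [pow_succ]; nth_rewrite 1 [hr]; rw [hr']; ring⟩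
      rw [padicValNat_dvd_iff_le (Nat.factorial_ne_zero _)] at h2
      omega
    · have hleg : (p - 1) * padicValNat p ((n / e).factorial)
          = (n / e) - (p.digits (n / e)).sum := sub_one_mul_padicValNat_factorial (n / e)
      have h2s : 2 * padicValNat p ((n / e).factorial)
          ≤ (p - 1) * padicValNat p ((n / e).factorial) :=
        Nat.mul_le_mul_right _ (by omega)
      have hsm : (p - 1) * padicValNat p ((n / e).factorial) ≤ n / e :=
        hleg ▸ Nat.sub_le _ _
      have hem : e * (n / e) ≤ n := by rw [mul_comm]; exact Nat.div_mul_le_self n e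
      calc 2 * (c * padicValNat p ((n / e).factorial))
          = c * (2 * padicValNat p ((n / e).factorial)) := by ring
        _ ≤ c * (n / e) := Nat.mul_le_mul_left c (le_trans h2s hsm)
        _ ≤ e * (n / e) := Nat.mul_le_mul_right _ hce
        _ ≤ n := hem
  have hterm : ∀ f ∈ pianoTilde p k e, ∀ n : ℕ, ∃ v : V,
      ι v = θ (PowerSeries.coeff n f) * ι π ^ n ∧ π ^ (n - n / 2) ∣ v := by
    intro f hf n
    simp only [pianoTilde, Set.mem_setOf_eq, InW] at hf
    obtain ⟨b, hb⟩ := hf n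
    obtain ⟨s, r, hrp, hfac, h2cs⟩ := hfact n
    have hcs : c * s ≤ n / 2 := by omega
    have hcsn : c * s ≤ n := le_trans hcs (Nat.div_le_self n 2)
    obtain ⟨ρ, hρ⟩ := hrunit r hrp
    refine ⟨A b * A (↑ρ⁻¹) * ((↑u⁻¹ : V)) ^ s * π ^ (n - c * s), ?_, ?_⟩
    · have hZne : ι ((A (p : WittVector p k)) ^ s * A (↑ρ : WittVector p k)) ≠ 0 := by
        intro h0
        have := hιinj (by rw [h0, map_zero] : ι _ = ι 0)
        rcases mul_eq_zero.mp this with h | h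
        · exact pow_ne_zero s hApne h
        · exact (A.isUnit_map ρ.isUnit).ne_zero h
      apply mul_right_cancel₀ hZne
      have hLHS : ι (A b * A (↑ρ⁻¹) * ((↑u⁻¹ : V)) ^ s * π ^ (n - c * s))
          * ι ((A (p : WittVector p k)) ^ s * A (↑ρ : WittVector p k))
          = ι (A b * π ^ n) := by
        rw [← map_mul]
        congr 1
        rw [hu]
        have h1 : A (↑ρ⁻¹) * A (↑ρ : WittVector p k) = 1 := by
          rw [← map_mul, ← Units.val_mul, inv_mul_cancel, Units.val_one, map_one]
        have h2 : ((↑u⁻¹ : V)) ^ s * ((u : V) * π ^ c) ^ s = π ^ (c * s) := by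
          rw [mul_pow, ← mul_assoc, ← mul_pow, Units.inv_mul, one_pow, one_mul, ← pow_mul]
        calc A b * A (↑ρ⁻¹) * ((↑u⁻¹ : V)) ^ s * π ^ (n - c * s)
            * (((u : V) * π ^ c) ^ s * A (↑ρ : WittVector p k))
            = A b * (A (↑ρ⁻¹) * A (↑ρ : WittVector p k))
              * ((((↑u⁻¹ : V)) ^ s * ((u : V) * π ^ c) ^ s) * π ^ (n - c * s)) := by ring
          _ = A b * π ^ n := by
              rw [h1, h2, mul_one, ← pow_add, Nat.add_sub_cancel' hcsn]
      rw [hLHS]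
      have hZθ : ι ((A (p : WittVector p k)) ^ s * A (↑ρ : WittVector p k))
          = θ (((n / e).factorial : FractionRing (WittVector p k))) := by
        rw [← map_pow, ← map_mul, ← hθ]
        congr 1
        rw [hρ, map_mul, map_pow, map_natCast, map_natCast, hfac]
        push_cast
        ring
      rw [hZθ, mul_right_comm, ← map_mul θ, ← hb, hθ, ← map_pow, ← map_mul]
    · have hle : n - n / 2 ≤ n - c * s := Nat.sub_le_sub_left hcs n
      exact Dvd.dvd.mul_left (pow_dvd_pow π hle) _
  have hInW_zero : InW p k 0 := ⟨0, map_zero _⟩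
  have hInW_add : ∀ x y, InW p k x → InW p k y → InW p k (x + y) := by
    rintro x y ⟨a, rfl⟩ ⟨b, rfl⟩; exact ⟨a + b, map_add _ _ _⟩
  have hclosed_add : ∀ f ∈ pianoTilde p k e, ∀ g ∈ pianoTilde p k e,
      f + g ∈ pianoTilde p k e := by
    intro f hf g hg
    simp only [pianoTilde, Set.mem_setOf_eq] at hf hg ⊢
    intro n
    rw [map_add, add_mul]
    exact hInW_add _ _ (hf n) (hg n)
  have hclosed_mul : ∀ f ∈ pianoTilde p k e, ∀ g ∈ pianoTilde p k e,
      f * g ∈ pianoTilde p k e := by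
    intro f hf g hg
    simp only [pianoTilde, Set.mem_setOf_eq, InW] at hf hg ⊢
    intro n
    rw [PowerSeries.coeff_mul, Finset.sum_mul]
    apply Finset.sum_induction _ (fun x => InW p k x) hInW_add hInW_zero
    rintro ⟨i, j⟩ hq
    have hij : i + j = n := Finset.HasAntidiagonal.mem_antidiagonal.mp hq
    obtain ⟨wi, hwi⟩ := hf i
    obtain ⟨wj, hwj⟩ := hg j
    have hdvd : (i / e).factorial * (j / e).factorial ∣ (n / e).factorial :=
      dvd_trans (Nat.factorial_mul_factorial_dvd_factorial_add _ _)
        (Nat.factorial_dvd_factorial (by rw [← hij]; exact Nat.add_div_le_add_div i j e))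
    obtain ⟨t, ht⟩ := hdvd
    refine ⟨wi * wj * (t : WittVector p k), ?_⟩
    rw [map_mul, map_mul, map_natCast, hwi, hwj, ht]
    push_cast
    ring
  choose T hT1 hT2 using hterm
  set S : (f : PowerSeries (FractionRing (WittVector p k))) → f ∈ pianoTilde p k e → ℕ → V :=
    fun f hf N => ∑ n ∈ Finset.range N, T f hf n with hSdef
  have hSc : ∀ f (hf : f ∈ pianoTilde p k e), ∀ M N, M ≤ N →
      π ^ (M - M / 2) ∣ S f hf N - S f hf M := by
    intro f hf M N hMN
    have hsub : S f hf N - S f hf M = ∑ n ∈ Finset.Ico M N, T f hf n := by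
      rw [hSdef]
      rw [Finset.sum_Ico_eq_sub _ hMN]
    rw [hsub]
    apply Finset.dvd_sum
    intro n hn
    have hMn : M ≤ n := (Finset.mem_Ico.mp hn).1
    exact dvd_trans (pow_dvd_pow π (by omega)) (hT2 f hf n)
  have hlim : ∀ f (hf : f ∈ pianoTilde p k e), ∃ L : V, ∀ m, ∃ N₀, ∀ N ≥ N₀,
      π ^ m ∣ L - S f hf N := by
    intro f hf
    obtain ⟨L, hL⟩ := V_complete p k V π c hc1 u hu (fun N => S f hf (2 * N)) (by
      intro m N M hN hM
      rcases le_total M N with h | h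
      · have := hSc f hf (2 * M) (2 * N) (by omega)
        have h2 : π ^ m ∣ S f hf (2 * N) - S f hf (2 * M) :=
          dvd_trans (pow_dvd_pow π (by omega)) this
        exact h2
      · have := hSc f hf (2 * N) (2 * M) (by omega)
        have h2 : π ^ m ∣ S f hf (2 * M) - S f hf (2 * N) :=
          dvd_trans (pow_dvd_pow π (by omega)) this
        exact (dvd_sub_comm).mp h2)
    refine ⟨L, fun m => ⟨2 * (c * m) + 2 * m, fun N hN => ?_⟩⟩
    have h1 : π ^ m ∣ L - S f hf (2 * (c * m)) := hL m (c * m) le_rfl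
    have hmcm : m ≤ c * m := Nat.le_mul_of_pos_left m hc1
    have e1 : 2 * (c * m) / 2 = c * m := Nat.mul_div_cancel_left _ (by norm_num)
    have h2 : π ^ m ∣ S f hf (2 * (c * m)) - S f hf N := by
      rcases le_total (2 * (c * m)) N with h | h
      · exact (dvd_sub_comm).mp (dvd_trans (pow_dvd_pow π (by omega))
          (hSc f hf (2 * (c * m)) N h))
      · exact dvd_trans (pow_dvd_pow π (by omega)) (hSc f hf N (2 * (c * m)) h)
    have := dvd_add h1 h2
    simpa using this
  choose Φ₀ hΦ₀ using hlim
  refine ⟨fun f hf n => ⟨T f hf n, hT1 f hf n⟩, ?_⟩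
  set Φ : PowerSeries (FractionRing (WittVector p k)) → V :=
    fun f => if hf : f ∈ pianoTilde p k e then Φ₀ f hf else 0 with hΦdef
  have hΦapprox : ∀ f (hf : f ∈ pianoTilde p k e), ∀ m, ∃ N₀, ∀ N ≥ N₀,
      π ^ m ∣ Φ f - S f hf N := by
    intro f hf m
    have : Φ f = Φ₀ f hf := dif_pos hf
    rw [this]
    exact hΦ₀ f hf m
  have huniq : ∀ x : V, (∀ m : ℕ, π ^ m ∣ x) → x = 0 :=
    fun x h => dvr_eq_zero_of_forall_dvd hπ_irr h
  have hΦ_of_eventually : ∀ f (hf : f ∈ pianoTilde p k e) (v : V) (N₁ : ℕ),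
      (∀ N, N₁ ≤ N → S f hf N = v) → Φ f = v := by
    intro f hf v N₁ hv
    have hz : ∀ m, π ^ m ∣ Φ f - v := by
      intro m
      obtain ⟨N₀, hN₀⟩ := hΦapprox f hf m
      have := hN₀ (max N₀ N₁) (le_max_left _ _)
      rwa [hv _ (le_max_right _ _)] at this
    have := huniq _ hz
    rw [sub_eq_zero] at this
    exact this
  refine ⟨Φ, ?_, ?_, ?_, ?_, ?_, ?_, ?_⟩
  · -- convergence of partial sums
    intro f hf s hs m
    have hseq : ∀ N, s N = S f hf N := by
      intro N
      apply hιinj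
      rw [hs N]
      simp only [hSdef]
      rw [map_sum]
      exact (Finset.sum_congr rfl fun n _ => (hT1 f hf n)).symm
    obtain ⟨N₀, hN₀⟩ := hΦapprox f hf m
    refine ⟨N₀, fun N hN => ?_⟩
    rw [hπ, Ideal.span_singleton_pow, Ideal.mem_span_singleton, hseq N]
    exact hN₀ N hN
  · -- additivity
    intro f hf g hg
    have hfg := hclosed_add f hf g hg
    have hTadd : ∀ n, T (f + g) hfg n = T f hf n + T g hg n := by
      intro n
      apply hιinj
      rw [map_add, hT1, hT1, hT1, map_add (PowerSeries.coeff n), map_add θ, add_mul]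
    have hSadd : ∀ N, S (f + g) hfg N = S f hf N + S g hg N := by
      intro N
      simp only [hSdef]
      rw [← Finset.sum_add_distrib]
      exact Finset.sum_congr rfl fun n _ => hTadd n
    have hz : ∀ m, π ^ m ∣ Φ (f + g) - (Φ f + Φ g) := by
      intro m
      obtain ⟨N₁, h1⟩ := hΦapprox (f + g) hfg m
      obtain ⟨N₂, h2⟩ := hΦapprox f hf m
      obtain ⟨N₃, h3⟩ := hΦapprox g hg m
      have d1 := h1 (max N₁ (max N₂ N₃)) (le_max_left _ _)
      have d2 := h2 (max N₁ (max N₂ N₃)) ((le_max_left _ _).trans (le_max_right _ _))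
      have d3 := h3 (max N₁ (max N₂ N₃)) ((le_max_right _ _).trans (le_max_right _ _))
      have hcomb := dvd_sub (dvd_sub d1 d2) d3
      have e : (Φ (f + g) - S (f + g) hfg (max N₁ (max N₂ N₃)))
          - (Φ f - S f hf (max N₁ (max N₂ N₃))) - (Φ g - S g hg (max N₁ (max N₂ N₃)))
          = Φ (f + g) - (Φ f + Φ g) := by
        rw [hSadd]; ring
      rwa [e] at hcomb
    have := huniq _ hz
    rwa [sub_eq_zero] at this
  · -- multiplicativity
    intro f hf g hg
    have hfg := hclosed_mul f hf g hg
    have hTmul : ∀ n, T (f * g) hfg n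
        = ∑ q ∈ Finset.HasAntidiagonal.antidiagonal n, T f hf q.1 * T g hg q.2 := by
      intro n
      apply hιinj
      rw [map_sum, hT1, PowerSeries.coeff_mul, map_sum θ, Finset.sum_mul]
      refine Finset.sum_congr rfl ?_
      rintro ⟨i, j⟩ hq
      have hij : i + j = n := Finset.HasAntidiagonal.mem_antidiagonal.mp hq
      rw [map_mul ι, hT1, hT1, map_mul θ, ← hij, pow_add]
      ring
    have hkey : ∀ N, π ^ (N - N / 2) ∣ S (f * g) hfg (2 * N) - S f hf N * S g hg N := by
      intro N
      have hdisj : (↑(Finset.range (2 * N)) : Set ℕ).PairwiseDisjoint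
          (fun n => (Finset.HasAntidiagonal.antidiagonal n : Finset (ℕ × ℕ))) := by
        intro a _ b _ hab
        simp only [Function.onFun, Finset.disjoint_left]
        intro q hqa hqb
        rw [Finset.HasAntidiagonal.mem_antidiagonal] at hqa hqb
        exact hab (by omega)
      have hBsum : S (f * g) hfg (2 * N) = ∑ q ∈ (Finset.range (2 * N)).biUnion
          (fun n => Finset.HasAntidiagonal.antidiagonal n), (fun q : ℕ × ℕ => T f hf q.1 * T g hg q.2) q := by
        rw [Finset.sum_biUnion hdisj]
        simp only [hSdef]
        exact Finset.sum_congr rfl fun n _ => hTmul n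
      have hCsub : (Finset.range N ×ˢ Finset.range N)
          ⊆ (Finset.range (2 * N)).biUnion (fun n => Finset.HasAntidiagonal.antidiagonal n) := by
        rintro ⟨i, j⟩ hq
        rw [Finset.mem_product, Finset.mem_range, Finset.mem_range] at hq
        rw [Finset.mem_biUnion]
        exact ⟨i + j, Finset.mem_range.mpr (by omega), Finset.HasAntidiagonal.mem_antidiagonal.mpr rfl⟩
      have hCsum : S f hf N * S g hg N
          = ∑ q ∈ Finset.range N ×ˢ Finset.range N,
              (fun q : ℕ × ℕ => T f hf q.1 * T g hg q.2) q := by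
        simp only [hSdef]
        rw [Finset.sum_mul_sum, ← Finset.sum_product']
      have hsd := Finset.sum_sdiff (f := fun q : ℕ × ℕ => T f hf q.1 * T g hg q.2) hCsub
      have hdiff : S (f * g) hfg (2 * N) - S f hf N * S g hg N
          = ∑ q ∈ ((Finset.range (2 * N)).biUnion (fun n => Finset.HasAntidiagonal.antidiagonal n))
              \ (Finset.range N ×ˢ Finset.range N),
              (fun q : ℕ × ℕ => T f hf q.1 * T g hg q.2) q := by
        rw [hBsum, hCsum, ← hsd]; ring
      rw [hdiff]
      apply Finset.dvd_sum
      rintro ⟨i, j⟩ hq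
      rw [Finset.mem_sdiff, Finset.mem_product, Finset.mem_range, Finset.mem_range] at hq
      have hij : N ≤ i ∨ N ≤ j := by omega
      rcases hij with h | h
      · exact (dvd_trans (pow_dvd_pow π (by omega)) (hT2 f hf i)).mul_right _
      · exact (dvd_trans (pow_dvd_pow π (by omega)) (hT2 g hg j)).mul_left _
    have hz : ∀ m, π ^ m ∣ Φ (f * g) - Φ f * Φ g := by
      intro m
      obtain ⟨N₁, h1⟩ := hΦapprox (f * g) hfg m
      obtain ⟨N₂, h2⟩ := hΦapprox f hf m
      obtain ⟨N₃, h3⟩ := hΦapprox g hg m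
      set N := max (max N₁ (max N₂ N₃)) (2 * m) with hNdef
      have hNm : m ≤ N - N / 2 := by
        have h2m : 2 * m ≤ N := le_max_right _ _
        omega
      have d1 : π ^ m ∣ Φ (f * g) - S (f * g) hfg (2 * N) := by
        apply h1
        have : N₁ ≤ N := (le_max_left _ _).trans (le_max_left _ _)
        omega
      have d2 := h2 N (((le_max_left _ _).trans (le_max_right _ _)).trans (le_max_left _ _))
      have d3 := h3 N (((le_max_right _ _).trans (le_max_right _ _)).trans (le_max_left _ _))
      have dkey : π ^ m ∣ S (f * g) hfg (2 * N) - S f hf N * S g hg N :=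
        dvd_trans (pow_dvd_pow π hNm) (hkey N)
      have d4 : π ^ m ∣ S f hf N * S g hg N - Φ f * Φ g := by
        have e : S f hf N * S g hg N - Φ f * Φ g
            = (S f hf N - Φ f) * S g hg N + Φ f * (S g hg N - Φ g) := by ring
        rw [e]
        exact dvd_add ((dvd_sub_comm.mp d2).mul_right _) ((dvd_sub_comm.mp d3).mul_left _)
      have hcomb := dvd_add (dvd_add d1 dkey) d4
      have e2 : Φ (f * g) - S (f * g) hfg (2 * N)
          + (S (f * g) hfg (2 * N) - S f hf N * S g hg N)
          + (S f hf N * S g hg N - Φ f * Φ g) = Φ (f * g) - Φ f * Φ g := by ring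
      rwa [e2] at hcomb
    have := huniq _ hz
    rwa [sub_eq_zero] at this
  · -- Φ 1 = 1
    have h1mem : (1 : PowerSeries (FractionRing (WittVector p k))) ∈ pianoTilde p k e := by
      simp only [pianoTilde, Set.mem_setOf_eq]
      intro n
      rw [PowerSeries.coeff_one]
      by_cases hn : n = 0
      · rw [if_pos hn, one_mul]
        exact ⟨(((n / e).factorial : ℕ) : WittVector p k), by rw [map_natCast]⟩
      · rw [if_neg hn, zero_mul]
        exact hInW_zero
    apply hΦ_of_eventually 1 h1mem 1 1
    intro N hN
    have hTn : ∀ n, T 1 h1mem n = if n = 0 then 1 else 0 := by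
      intro n
      apply hιinj
      rw [hT1, PowerSeries.coeff_one]
      split_ifs with hn
      · subst hn
        simp
      · simp
    simp only [hSdef]
    rw [Finset.sum_congr rfl fun n _ => hTn n,
      Finset.sum_ite_eq' (Finset.range N) 0 (fun _ => (1 : V))]
    rw [if_pos (Finset.mem_range.mpr (by omega))]
  · -- Φ (C (algebraMap w)) = algebraMap w
    intro w
    have hmem : (PowerSeries.C (R := FractionRing (WittVector p k)) (algK w)) ∈ pianoTilde p k e := by
      simp only [pianoTilde, Set.mem_setOf_eq]
      intro n
      rw [PowerSeries.coeff_C]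
      by_cases hn : n = 0
      · rw [if_pos hn]
        exact ⟨w * (((n / e).factorial : ℕ) : WittVector p k), by rw [map_mul, map_natCast]⟩
      · rw [if_neg hn, zero_mul]
        exact hInW_zero
    apply hΦ_of_eventually _ hmem (A w) 1
    intro N hN
    have hTn : ∀ n, T _ hmem n = if n = 0 then A w else 0 := by
      intro n
      apply hιinj
      rw [hT1, PowerSeries.coeff_C]
      split_ifs with hn
      · subst hn
        rw [pow_zero, mul_one, hθ]
      · simp
    simp only [hSdef]
    rw [Finset.sum_congr rfl fun n _ => hTn n,
      Finset.sum_ite_eq' (Finset.range N) 0 (fun _ => A w)]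
    rw [if_pos (Finset.mem_range.mpr (by omega))]
  · -- Φ X = π
    have hXmem : (PowerSeries.X : PowerSeries (FractionRing (WittVector p k)))
        ∈ pianoTilde p k e := by
      simp only [pianoTilde, Set.mem_setOf_eq]
      intro n
      rw [PowerSeries.coeff_X]
      by_cases hn : n = 1
      · rw [if_pos hn, one_mul]
        exact ⟨(((n / e).factorial : ℕ) : WittVector p k), by rw [map_natCast]⟩
      · rw [if_neg hn, zero_mul]
        exact hInW_zero
    apply hΦ_of_eventually _ hXmem π 2
    intro N hN
    have hTn : ∀ n, T _ hXmem n = if n = 1 then π else 0 := by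
      intro n
      apply hιinj
      rw [hT1, PowerSeries.coeff_X]
      split_ifs with hn
      · subst hn
        rw [pow_one, map_one, one_mul]
      · simp
    simp only [hSdef]
    rw [Finset.sum_congr rfl fun n _ => hTn n,
      Finset.sum_ite_eq' (Finset.range N) 1 (fun _ => π)]
    rw [if_pos (Finset.mem_range.mpr (by omega))]
  · -- surjectivity
    intro v
    have hstep : ∀ x : V, ∃ w t, x = A w + π * t := by
      intro x
      obtain ⟨w, hw⟩ := hres x
      rw [hπ, Ideal.mem_span_singleton] at hw
      obtain ⟨t, ht⟩ := hw
      exact ⟨w, t, by rw [← ht]; ring⟩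
    choose wfn tfn hwt using hstep
    set vs : ℕ → V := fun n => Nat.rec v (fun _ x => tfn x) n with hvs
    have hvs0 : vs 0 = v := rfl
    have hvsS : ∀ n, vs (n + 1) = tfn (vs n) := fun n => rfl
    set f : PowerSeries (FractionRing (WittVector p k)) :=
      PowerSeries.mk fun n => algK (wfn (vs n)) with hfdef
    have hcoef : ∀ n, PowerSeries.coeff n f = algK (wfn (vs n)) := by
      intro n
      rw [hfdef, PowerSeries.coeff_mk]
    have hfmem : f ∈ pianoTilde p k e := by
      simp only [pianoTilde, Set.mem_setOf_eq]
      intro n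
      rw [hcoef]
      exact ⟨wfn (vs n) * (((n / e).factorial : ℕ) : WittVector p k),
        by rw [map_mul, map_natCast]⟩
    refine ⟨f, hfmem, ?_⟩
    have hTn : ∀ n, T f hfmem n = A (wfn (vs n)) * π ^ n := by
      intro n
      apply hιinj
      rw [hT1, hcoef, hθ, map_mul, map_pow]
    have hinv : ∀ N, v - S f hfmem N = π ^ N * vs N := by
      intro N
      induction N with
      | zero =>
        simp only [hSdef]
        simp [hvs0]
      | succ N ih =>
        simp only [hSdef] at ih ⊢
        rw [Finset.sum_range_succ]
        have e : v - (∑ n ∈ Finset.range N, T f hfmem n + T f hfmem N)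
            = (v - ∑ n ∈ Finset.range N, T f hfmem n) - T f hfmem N := by ring
        rw [e, ih, hTn]
        have hw := hwt (vs N)
        have h2 : vs N - A (wfn (vs N)) = π * tfn (vs N) := sub_eq_iff_eq_add'.mpr hw
        calc π ^ N * vs N - A (wfn (vs N)) * π ^ N
            = π ^ N * (vs N - A (wfn (vs N))) := by ring
          _ = π ^ N * (π * tfn (vs N)) := by rw [h2]
          _ = π ^ (N + 1) * vs (N + 1) := by rw [hvsS, pow_succ]; ring
    have hz : ∀ m, π ^ m ∣ Φ f - v := by
      intro m
      obtain ⟨N₀, hN₀⟩ := hΦapprox f hfmem m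
      have d1 := hN₀ (max N₀ m) (le_max_left _ _)
      have d2 : π ^ m ∣ v - S f hfmem (max N₀ m) := by
        rw [hinv]
        exact (pow_dvd_pow π (le_max_right _ _)).mul_right _
      have hcomb := dvd_sub d1 d2
      have e : Φ f - S f hfmem (max N₀ m) - (v - S f hfmem (max N₀ m)) = Φ f - v := by ring
      rwa [e] at hcomb
    have := huniq _ hz
    rwa [sub_eq_zero] at this
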